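/- Let E be a Hausdorff topological real vector space, M ⊆ E a nonempty compact convex set, and H : E → ℝ continuous on M and strictly convex on M. Let (Q_n) be a decreasing sequence (Q_n ⊇ Q_{n+1}) of nonempty closed convex subsets of M, and let Q := ⋂_n Q_n (which is nonempty by compactness). Let μ_n be the unique minimizer of H over Q_n and μ* the unique minimizer of H over Q. Then μ_n → μ* in E and H(μ_n) → H(μ*). -/

import Mathlib

/-- Stability of minimizers of a continuous strictly convex function along a decreasing
sequence of nonempty closed convex subsets of a compact convex set: the minimizers over
`Q n` converge to the minimizer over `⋂ n, Q n`, and the minimum values converge as well. -/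
theorem minimizers_converge_along_decreasing_sets
    {E : Type*} [AddCommGroup E] [Module ℝ E] [TopologicalSpace E] [T2Space E]
    [IsTopologicalAddGroup E] [ContinuousSMul ℝ E]
    (M : Set E) (hMne : M.Nonempty) (hMcomp : IsCompact M) (hMconv : Convex ℝ M)
    (H : E → ℝ) (hHcont : ContinuousOn H M) (hHconv : StrictConvexOn ℝ M H)
    (Q : ℕ → Set E) (hQsub : ∀ n, Q n ⊆ M) (hQne : ∀ n, (Q n).Nonempty)
    (hQclosed : ∀ n, IsClosed (Q n)) (hQconv : ∀ n, Convex ℝ (Q n))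
    (hQdec : ∀ n, Q (n + 1) ⊆ Q n)
    (μn : ℕ → E) (hμnmem : ∀ n, μn n ∈ Q n)
    (hμnopt : ∀ n, ∀ m ∈ Q n, H (μn n) ≤ H m)
    (μstar : E) (hμstarmem : μstar ∈ ⋂ n, Q n)
    (hμstaropt : ∀ m ∈ ⋂ n, Q n, H μstar ≤ H m) :
    Filter.Tendsto μn Filter.atTop (nhds μstar) ∧
      Filter.Tendsto (fun n => H (μn n)) Filter.atTop (nhds (H μstar)) := by
  have hanti : Antitone Q := antitone_nat_of_succ_le hQdec
  have hmemM : ∀ m, μn m ∈ M := fun m => hQsub m (hμnmem m)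
  have hμstarM : μstar ∈ M := hQsub 0 (Set.mem_iInter.mp hμstarmem 0)
  -- the values are bounded above by H μstar
  have hle : ∀ m, H (μn m) ≤ H μstar := fun m =>
    hμnopt m μstar (Set.mem_iInter.mp hμstarmem m)
  -- every cluster point in M equals μstar
  have key : ∀ a ∈ M, MapClusterPt a Filter.atTop μn → a = μstar := by
    intro a haM hc
    -- a ∈ Q n for each n
    have haQ : ∀ n, a ∈ Q n := by
      intro n
      have hev : ∀ᶠ m in Filter.atTop, μn m ∈ Q n :=
        Filter.eventually_atTop.mpr ⟨n, fun m hm => hanti hm (hμnmem m)⟩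
      have : ClusterPt a (Filter.principal (Q n)) :=
        hc.clusterPt.mono (Filter.le_principal_iff.mpr (Filter.eventually_map.mpr hev))
      simpa [(hQclosed n).closure_eq] using mem_closure_iff_clusterPt.mpr this
    -- H a is a cluster point of H ∘ μn
    have hmapM : Filter.map μn Filter.atTop ≤ Filter.principal M :=
      Filter.le_principal_iff.mpr (Filter.mem_map.mpr (Filter.Eventually.of_forall hmemM))
    have hHa : MapClusterPt (H a) Filter.atTop (H ∘ μn) := by
      have h1 : nhds a ⊓ Filter.map μn Filter.atTop ≤ nhdsWithin a M :=
        le_inf inf_le_left (inf_le_right.trans hmapM)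
      exact hc.tendsto_comp' ((hHcont a haM).mono_left h1)
    -- hence H a ≤ H μstar
    have hHale : H a ≤ H μstar := by
      have hclos : ClusterPt (H a) (Filter.principal {x : ℝ | x ≤ H μstar}) :=
        hHa.clusterPt.mono (Filter.le_principal_iff.mpr (Filter.eventually_map.mpr
          (Filter.Eventually.of_forall (fun m => hle m))))
      have := mem_closure_iff_clusterPt.mpr hclos
      rwa [show {x : ℝ | x ≤ H μstar} = Set.Iic (H μstar) from rfl,
        isClosed_Iic.closure_eq] at this
    -- uniqueness of minimizer via strict convexity
    by_contra hne
    have hzQ : ∀ n, (1/2 : ℝ) • a + (1/2 : ℝ) • μstar ∈ Q n := fun n =>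
      hQconv n (haQ n) (Set.mem_iInter.mp hμstarmem n) (by norm_num) (by norm_num)
        (by norm_num)
    have hzM : H ((1/2 : ℝ) • a + (1/2 : ℝ) • μstar) <
        (1/2 : ℝ) * H a + (1/2 : ℝ) * H μstar :=
      hHconv.2 haM hμstarM hne (by norm_num) (by norm_num) (by norm_num)
    have hopt := hμstaropt _ (Set.mem_iInter.mpr hzQ)
    nlinarith
  have htend : Filter.Tendsto μn Filter.atTop (nhds μstar) :=
    hMcomp.tendsto_nhds_of_unique_mapClusterPt (Filter.Eventually.of_forall hmemM) key
  refine ⟨htend, ?_⟩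
  have htendW : Filter.Tendsto μn Filter.atTop (nhdsWithin μstar M) :=
    tendsto_nhdsWithin_iff.mpr ⟨htend, Filter.Eventually.of_forall hmemM⟩
  exact (hHcont μstar hμstarM).tendsto.comp htendW
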